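/- For every integer n ≥ 3, the diameter of the LRX Cayley graph of S_n is at least n(n−1) − 2⌊n²/4⌋ − 1; for even n this lower bound equals n(n−1)/2 − n/2 − 1. -/

import Mathlib

namespace LRXAux

/-- `L` generator -/
def Lp (n : ℕ) : Equiv.Perm (ZMod n) := Equiv.addRight 1
/-- `X` generator -/
def Xp (n : ℕ) : Equiv.Perm (ZMod n) := Equiv.swap 0 1
/-- generating set -/
def genS (n : ℕ) : Set (Equiv.Perm (ZMod n)) := {Lp n, (Lp n)⁻¹, Xp n}
/-- the reversal permutation -/
def negPerm (n : ℕ) : Equiv.Perm (ZMod n) := ⟨fun v => -v, fun v => -v, neg_neg, neg_neg⟩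

lemma negPerm_inv_apply {n : ℕ} (v : ZMod n) : (negPerm n)⁻¹ v = -v := rfl

/-- index set of pairs `⟨b, a⟩` with `a < b < n` -/
def pairsS (n : ℕ) : Finset ((_ : ℕ) × ℕ) := (Finset.range n).sigma fun b => Finset.range b

/-- the pair term -/
def pterm (n : ℕ) (P : ZMod n → ℤ) (p : (_ : ℕ) × ℕ) : ℕ :=
  ((P ((p.fst : ℕ) : ZMod n) - P ((p.snd : ℕ) : ZMod n)) / (n : ℤ)).natAbs

open scoped Classical in
/-- number of X's, classically -/
noncomputable def xCount (n : ℕ) (w : List (Equiv.Perm (ZMod n))) : ℕ :=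
  (w.map (fun x => if x = Xp n then 1 else 0)).sum

lemma xCount_nil (n : ℕ) : xCount n [] = 0 := rfl

lemma xCount_append (n : ℕ) (w w' : List (Equiv.Perm (ZMod n))) :
    xCount n (w ++ w') = xCount n w + xCount n w' := by
  simp [xCount]

open scoped Classical in
lemma xCount_cons (n : ℕ) (a : Equiv.Perm (ZMod n)) (w : List (Equiv.Perm (ZMod n))) :
    xCount n (a :: w) = (if a = Xp n then 1 else 0) + xCount n w := by
  simp [xCount]

open scoped Classical in
lemma xCount_singleton (n : ℕ) (a : Equiv.Perm (ZMod n)) :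
    xCount n [a] = if a = Xp n then 1 else 0 := by
  simp [xCount]

-- ediv helpers
lemma ediv_helper {n : ℤ} (hn : 0 < n) (q r : ℤ) (h0 : 0 ≤ r) (h1 : r < n) :
    (n * q + r) / n = q := by
  rw [add_comm, mul_comm, Int.add_mul_ediv_right _ _ (ne_of_gt hn),
    Int.ediv_eq_zero_of_lt h0 h1, zero_add]

lemma ediv_succ {n : ℤ} (hn : 0 < n) {D : ℤ} (h : ¬ n ∣ (D + 1)) : (D + 1) / n = D / n := by
  have hmod := Int.mul_ediv_add_emod D n
  have h0 : 0 ≤ D % n := Int.emod_nonneg D (ne_of_gt hn)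
  have h1 : D % n < n := Int.emod_lt_of_pos D hn
  have hr : D % n + 1 < n := by
    rcases lt_or_eq_of_le (by omega : D % n + 1 ≤ n) with h' | h'
    · exact h'
    · exfalso
      refine h ⟨D / n + 1, ?_⟩
      have he : n * (D / n + 1) = n * (D / n) + n := by ring
      omega
  have : D + 1 = n * (D / n) + (D % n + 1) := by omega
  rw [this, ediv_helper hn _ _ (by omega) hr]

lemma ediv_pred {n : ℤ} (hn : 0 < n) {D : ℤ} (h : ¬ n ∣ D) : (D - 1) / n = D / n := by
  have hmod := Int.mul_ediv_add_emod D n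
  have h0 : 0 ≤ D % n := Int.emod_nonneg D (ne_of_gt hn)
  have h1 : D % n < n := Int.emod_lt_of_pos D hn
  have hr : D % n ≠ 0 := fun h' => h ⟨D / n, by omega⟩
  have : D - 1 = n * (D / n) + (D % n - 1) := by omega
  rw [this, ediv_helper hn _ _ (by omega) (by omega)]

end LRXAux

namespace LRXAux

lemma card_pairsS (n : ℕ) : (pairsS n).card = n * (n - 1) / 2 := by
  have h := Finset.sum_range_id_mul_two n
  have : (pairsS n).card = ∑ b ∈ Finset.range n, b := by
    simp [pairsS, Finset.card_sigma]
  omega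

open scoped Classical in
lemma sum_lower {n : ℕ} (hn : 3 ≤ n) (P : ZMod n → ℤ)
    (hP : ∀ v, ((P v : ℤ) : ZMod n) = -v) :
    n * (n - 1) / 2 ≤ (∑ p ∈ pairsS n, pterm n P p) + n ^ 2 / 4 := by
  haveI : NeZero n := ⟨by omega⟩
  have hn0 : (0 : ℤ) < (n : ℤ) := by exact_mod_cast (by omega : 0 < n)
  have hdvd : ∀ a : ℕ, (n : ℤ) ∣ (P ((a : ℕ) : ZMod n) + (a : ℤ)) := by
    intro a
    rw [← ZMod.intCast_zmod_eq_zero_iff_dvd]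
    push_cast
    rw [hP]
    ring
  set M : ℕ → ℤ := fun a => (P ((a : ℕ) : ZMod n) + (a : ℤ)) / (n : ℤ) with hM
  have hMspec : ∀ a : ℕ, P ((a : ℕ) : ZMod n) = (n : ℤ) * M a - (a : ℤ) := by
    intro a
    have := Int.mul_ediv_cancel' (hdvd a)
    simp only [hM]
    omega
  have hterm : ∀ p ∈ pairsS n, pterm n P p = (M p.fst - M p.snd - 1).natAbs := by
    rintro ⟨b, a⟩ hp
    simp only [pairsS, Finset.mem_sigma, Finset.mem_range] at hp
    obtain ⟨hbn, hab⟩ := hp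
    have hD : P ((b : ℕ) : ZMod n) - P ((a : ℕ) : ZMod n)
        = (n : ℤ) * (M b - M a - 1) + ((n : ℤ) - (b : ℤ) + (a : ℤ)) := by
      rw [hMspec, hMspec]; ring
    have hbn' : (b : ℤ) < n := by exact_mod_cast hbn
    have hab' : (a : ℤ) < b := by exact_mod_cast hab
    simp only [pterm, hD]
    rw [ediv_helper hn0 _ _ (by omega) (by omega)]
  set bad := (pairsS n).filter (fun p => M p.fst = M p.snd + 1) with hbad
  set good := (pairsS n).filter (fun p => ¬ M p.fst = M p.snd + 1) with hgood
  have hcards : bad.card + good.card = (pairsS n).card :=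
    Finset.card_filter_add_card_filter_not _
  have hsum1 : good.card ≤ ∑ p ∈ pairsS n, pterm n P p := by
    calc good.card = ∑ _p ∈ good, 1 := by simp
      _ ≤ ∑ p ∈ good, pterm n P p := by
          apply Finset.sum_le_sum
          rintro p hp
          rw [hgood, Finset.mem_filter] at hp
          rw [hterm p hp.1]
          omega
      _ ≤ ∑ p ∈ pairsS n, pterm n P p := by
          apply Finset.sum_le_sum_of_subset
          rw [hgood]; exact Finset.filter_subset _ _
  have hbadcard : bad.card ≤ n ^ 2 / 4 := by
    set E := (Finset.range n).filter (fun a => Even (M a)) with hE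
    set O := (Finset.range n).filter (fun a => ¬ Even (M a)) with hO
    have hinj : bad.card ≤ (E ×ˢ O).card := by
      apply Finset.card_le_card_of_injOn
        (fun p => if Even (M p.snd) then ((p.snd : ℕ), (p.fst : ℕ)) else (p.fst, p.snd))
      · rintro ⟨b, a⟩ hp
        rw [hbad, Finset.mem_coe, Finset.mem_filter] at hp
        obtain ⟨hp1, heq⟩ := hp
        simp only [pairsS, Finset.mem_sigma, Finset.mem_range] at hp1
        obtain ⟨hbn, hab⟩ := hp1
        have hpar : Even (M b) ↔ ¬ Even (M a) := by
          rw [heq]; exact Int.even_add_one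
        rw [Finset.mem_coe, Finset.mem_product]
        by_cases he : Even (M a)
        · simp only [if_pos he]
          constructor
          · rw [hE, Finset.mem_filter, Finset.mem_range]
            exact ⟨by omega, he⟩
          · rw [hO, Finset.mem_filter, Finset.mem_range]
            exact ⟨hbn, fun hmb => (hpar.mp hmb) he⟩
        · simp only [if_neg he]
          constructor
          · rw [hE, Finset.mem_filter, Finset.mem_range]
            exact ⟨hbn, hpar.mpr he⟩
          · rw [hO, Finset.mem_filter, Finset.mem_range]
            exact ⟨by omega, he⟩
      · rintro ⟨b, a⟩ hp ⟨b', a'⟩ hp' hfe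
        simp only [hbad, Finset.coe_filter, Set.mem_setOf_eq, pairsS,
          Finset.mem_sigma, Finset.mem_range] at hp hp'
        obtain ⟨⟨hbn, hab⟩, heq⟩ := hp
        obtain ⟨⟨hbn', hab'⟩, heq'⟩ := hp'
        simp only at hfe
        by_cases he : Even (M a) <;> by_cases he' : Even (M a') <;>
          simp only [he, he', if_pos, if_neg, not_false_iff, Prod.mk.injEq] at hfe
        · obtain ⟨h1, h2⟩ := hfe; subst h1; subst h2; rfl
        · omega
        · omega
        · obtain ⟨h1, h2⟩ := hfe; subst h1; subst h2; rfl
    have hEO : E.card + O.card = n := by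
      have h := Finset.card_filter_add_card_filter_not
        (s := Finset.range n) (fun a => Even (M a))
      rw [hE, hO]
      rw [h, Finset.card_range]
    have hprod : (E ×ˢ O).card = E.card * O.card := Finset.card_product E O
    have h4 : 4 * (E.card * O.card) ≤ n ^ 2 := by
      nlinarith [sq_nonneg ((E.card : ℤ) - O.card),
        (by exact_mod_cast congrArg (Nat.cast : ℕ → ℤ) hEO : (E.card : ℤ) + O.card = n)]
    omega
  have hcard := card_pairsS n
  omega

end LRXAux

namespace LRXAux

lemma Lp_apply {n : ℕ} (x : ZMod n) : Lp n x = x + 1 := by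
  simp [Lp]

lemma Lp_inv_apply {n : ℕ} (x : ZMod n) : (Lp n)⁻¹ x = x - 1 := by
  rw [Equiv.Perm.inv_eq_iff_eq, Lp_apply]; ring

lemma prodapp_inv {n : ℕ} (w : List (Equiv.Perm (ZMod n))) (a : Equiv.Perm (ZMod n))
    (v : ZMod n) : (w ++ [a]).prod⁻¹ v = a⁻¹ (w.prod⁻¹ v) := by
  rw [List.prod_append, List.prod_singleton, mul_inv_rev, Equiv.Perm.mul_apply]

lemma hcast_val {n : ℕ} [NeZero n] (v : ZMod n) : ((v.val : ℕ) : ZMod n) = v := by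
  rw [ZMod.natCast_val, ZMod.cast_id]

theorem exists_lift {n : ℕ} (hn : 3 ≤ n) (w : List (Equiv.Perm (ZMod n))) :
    (∀ x ∈ w, x ∈ genS n) →
    ∃ P : ZMod n → ℤ, (∀ v, ((P v : ℤ) : ZMod n) = w.prod⁻¹ v) ∧
      (∑ p ∈ pairsS n, pterm n P p) ≤ xCount n w := by
  haveI : NeZero n := ⟨by omega⟩
  haveI : Fact (1 < n) := ⟨by omega⟩
  have hn0 : (0 : ℤ) < (n : ℤ) := by exact_mod_cast (by omega : 0 < n)
  induction w using List.reverseRecOn with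
  | nil =>
    intro _
    refine ⟨fun v => (v.val : ℤ), fun v => ?_, ?_⟩
    · push_cast
      rw [hcast_val]
      simp
    · have : ∀ p ∈ pairsS n, pterm n (fun v => (v.val : ℤ)) p = 0 := by
        rintro ⟨b, a⟩ hp
        simp only [pairsS, Finset.mem_sigma, Finset.mem_range] at hp
        obtain ⟨hbn, hab⟩ := hp
        have h1 : (((b : ℕ) : ZMod n)).val = b := ZMod.val_cast_of_lt hbn
        have h2 : (((a : ℕ) : ZMod n)).val = a := ZMod.val_cast_of_lt (by omega)
        have h0 : (0:ℤ) ≤ ((b:ℕ):ℤ) - ((a:ℕ):ℤ) := by push_cast; omega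
        have h3 : ((b:ℕ):ℤ) - ((a:ℕ):ℤ) < (n:ℤ) := by push_cast; omega
        simp only [pterm, h1, h2]
        rw [Int.ediv_eq_zero_of_lt h0 h3]
        simp
      rw [Finset.sum_congr rfl this]
      simp [xCount_nil]
  | append_singleton w a ih =>
    intro hw
    have hw' : ∀ x ∈ w, x ∈ genS n := fun x hx => hw x (by simp [hx])
    have ha : a ∈ genS n := hw a (by simp)
    obtain ⟨P, hP, hsum⟩ := ih hw'
    have hxle : xCount n w ≤ xCount n (w ++ [a]) := by
      rw [xCount_append]; omega
    rcases ha with ha | ha | ha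
    · -- a = Lp n
      subst ha
      refine ⟨fun v => P v - 1, fun v => ?_, ?_⟩
      · rw [prodapp_inv, Lp_inv_apply]
        push_cast
        rw [hP]
      · have he : ∀ p ∈ pairsS n, pterm n (fun v => P v - 1) p = pterm n P p := by
          intro p _
          simp only [pterm]
          congr 2
          ring
        rw [Finset.sum_congr rfl he]
        exact le_trans hsum hxle
    · -- a = (Lp n)⁻¹
      subst ha
      refine ⟨fun v => P v + 1, fun v => ?_, ?_⟩
      · rw [prodapp_inv, inv_inv, Lp_apply]
        push_cast
        rw [hP]
      · have he : ∀ p ∈ pairsS n, pterm n (fun v => P v + 1) p = pterm n P p := by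
          intro p _
          simp only [pterm]
          congr 2
          ring
        rw [Finset.sum_congr rfl he]
        exact le_trans hsum hxle
    · -- a = Xp n
      subst ha
      set u := w.prod 0 with hu
      set t := w.prod 1 with ht
      have h01 : (0 : ZMod n) ≠ 1 := zero_ne_one
      have hut : u ≠ t := fun h => h01 (w.prod.injective h)
      have hposu : w.prod⁻¹ u = 0 := Equiv.symm_apply_apply _ _
      have hpost : w.prod⁻¹ t = 1 := Equiv.symm_apply_apply _ _
      set δ : ZMod n → ℤ := fun v => if v = u then 1 else if v = t then -1 else 0 with hδ
      set P' : ZMod n → ℤ := fun v => P v + δ v with hP'def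
      have hP'u : P' u = P u + 1 := by simp [hP'def, hδ]
      have hP't : P' t = P t - 1 := by
        have h1 : (t = u) = False := by simp [Ne.symm hut]
        simp [hP'def, hδ, h1]
        ring
      have hP'o : ∀ v, v ≠ u → v ≠ t → P' v = P v := by
        intro v h1 h2
        simp only [hP'def, hδ, if_neg h1, if_neg h2]
        ring
      have hP' : ∀ v, ((P' v : ℤ) : ZMod n) = (w ++ [Xp n]).prod⁻¹ v := by
        intro v
        rw [prodapp_inv]
        have hXinv : (Xp n)⁻¹ = Equiv.swap (0 : ZMod n) 1 := by
          rw [Xp, Equiv.swap_inv]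
        rw [hXinv]
        by_cases hvu : v = u
        · rw [hvu, hposu, Equiv.swap_apply_left, hP'u]
          push_cast
          rw [hP, hposu]
          ring
        · by_cases hvt : v = t
          · rw [hvt, hpost, Equiv.swap_apply_right, hP't]
            push_cast
            rw [hP, hpost]
            ring
          · have hp0 : w.prod⁻¹ v ≠ 0 := by
              intro h
              exact hvu (by rw [hu, ← h, ← Equiv.Perm.mul_apply, mul_inv_cancel, Equiv.Perm.one_apply])
            have hp1 : w.prod⁻¹ v ≠ 1 := by
              intro h
              exact hvt (by rw [ht, ← h, ← Equiv.Perm.mul_apply, mul_inv_cancel, Equiv.Perm.one_apply])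
            rw [Equiv.swap_apply_of_ne_of_ne hp0 hp1, hP'o v hvu hvt, hP]
      have hnd : ∀ x y : ZMod n, x ≠ y → ¬ (n : ℤ) ∣ (P x - P y) := by
        intro x y hxy hdvd
        have h0 : ((P x - P y : ℤ) : ZMod n) = 0 :=
          (ZMod.intCast_zmod_eq_zero_iff_dvd _ n).mpr hdvd
        push_cast at h0
        rw [hP, hP] at h0
        exact hxy ((w.prod⁻¹).injective (sub_eq_zero.mp h0))
      have hnd' : ∀ x y : ZMod n, x ≠ y → ¬ (n : ℤ) ∣ (P' x - P' y) := by
        intro x y hxy hdvd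
        have h0 : ((P' x - P' y : ℤ) : ZMod n) = 0 :=
          (ZMod.intCast_zmod_eq_zero_iff_dvd _ n).mpr hdvd
        push_cast at h0
        rw [hP', hP'] at h0
        exact hxy (((w ++ [Xp n]).prod⁻¹).injective (sub_eq_zero.mp h0))
      have hsame : ∀ x y : ZMod n, x ≠ y → ¬(x = u ∧ y = t) → ¬(x = t ∧ y = u) →
          (P' x - P' y) / (n : ℤ) = (P x - P y) / (n : ℤ) := by
        intro x y hxy hc1 hc2
        by_cases hxu : x = u
        · have hyt : y ≠ t := fun h => hc1 ⟨hxu, h⟩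
          have hyu : y ≠ u := fun h => hxy (hxu.trans h.symm)
          have hnew : P' x - P' y = (P x - P y) + 1 := by
            rw [hxu, hP'u, hP'o y hyu hyt]; ring
          rw [hnew]
          exact ediv_succ hn0 (by rw [← hnew]; exact hnd' _ _ hxy)
        · by_cases hxt : x = t
          · have hyu : y ≠ u := fun h => hc2 ⟨hxt, h⟩
            have hyt : y ≠ t := fun h => hxy (hxt.trans h.symm)
            have hnew : P' x - P' y = (P x - P y) - 1 := by
              rw [hxt, hP't, hP'o y hyu hyt]; ring
            rw [hnew]
            exact ediv_pred hn0 (hnd _ _ hxy)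
          · by_cases hyu : y = u
            · have hnew : P' x - P' y = (P x - P y) - 1 := by
                rw [hyu, hP'u, hP'o x hxu hxt]; ring
              rw [hnew]
              exact ediv_pred hn0 (hnd _ _ hxy)
            · by_cases hyt : y = t
              · have hnew : P' x - P' y = (P x - P y) + 1 := by
                  rw [hyt, hP't, hP'o x hxu hxt]; ring
                rw [hnew]
                exact ediv_succ hn0 (by rw [← hnew]; exact hnd' _ _ hxy)
              · rw [hP'o x hxu hxt, hP'o y hyu hyt]
      have hvalne : u.val ≠ t.val := by
        intro h
        exact hut (by rw [← hcast_val u, ← hcast_val t, h])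
      have hn1 : (1 : ℤ) < (n : ℤ) := by exact_mod_cast (by omega : 1 < n)
      -- the swapped pair p₀ and its term bound, then the sum
      refine ⟨P', hP', ?_⟩
      have key : ∃ p₀ ∈ pairsS n, pterm n P' p₀ ≤ pterm n P p₀ + 1 ∧
          (∀ p ∈ (pairsS n).erase p₀, pterm n P' p = pterm n P p) := by
        rcases Nat.lt_or_ge u.val t.val with huv | hge
        · refine ⟨⟨t.val, u.val⟩, ?_, ?_, ?_⟩
          · simp only [pairsS, Finset.mem_sigma, Finset.mem_range]
            exact ⟨ZMod.val_lt t, huv⟩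
          · -- term bound at p₀
            have hD1 : ((P t - P u : ℤ) : ZMod n) = 1 := by
              push_cast
              rw [hP, hP, hposu, hpost]
              ring
            have hdvd1 : (n : ℤ) ∣ (P t - P u - 1) := by
              rw [← ZMod.intCast_zmod_eq_zero_iff_dvd]
              push_cast
              rw [hP, hP, hposu, hpost]
              ring
            obtain ⟨q, hq⟩ := hdvd1
            have hold : (P t - P u) / (n : ℤ) = q := by
              rw [show P t - P u = (n : ℤ) * q + 1 by linarith]
              exact ediv_helper hn0 q 1 (by omega) hn1
            have hnew : (P' t - P' u) / (n : ℤ) = q - 1 := by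
              rw [hP't, hP'u,
                show P t - 1 - (P u + 1) = (n : ℤ) * (q - 1) + ((n : ℤ) - 1) by linarith]
              exact ediv_helper hn0 _ _ (by omega) (by omega)
            simp only [pterm, hcast_val]
            rw [hold, hnew]
            omega
          · intro p hp
            rw [Finset.mem_erase] at hp
            obtain ⟨hne, hmem⟩ := hp
            obtain ⟨pf, ps⟩ := p
            simp only [pairsS, Finset.mem_sigma, Finset.mem_range] at hmem
            obtain ⟨hfn, hsf⟩ := hmem
            have hxy : ((pf : ℕ) : ZMod n) ≠ ((ps : ℕ) : ZMod n) := by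
              intro h
              have := congrArg ZMod.val h
              rw [ZMod.val_cast_of_lt hfn, ZMod.val_cast_of_lt (by omega)] at this
              omega
            have hc1 : ¬(((pf : ℕ) : ZMod n) = u ∧ ((ps : ℕ) : ZMod n) = t) := by
              rintro ⟨h1, h2⟩
              have e1 := congrArg ZMod.val h1
              have e2 := congrArg ZMod.val h2
              rw [ZMod.val_cast_of_lt hfn] at e1
              rw [ZMod.val_cast_of_lt (by omega)] at e2
              omega
            have hc2 : ¬(((pf : ℕ) : ZMod n) = t ∧ ((ps : ℕ) : ZMod n) = u) := by
              rintro ⟨h1, h2⟩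
              have e1 := congrArg ZMod.val h1
              have e2 := congrArg ZMod.val h2
              rw [ZMod.val_cast_of_lt hfn] at e1
              rw [ZMod.val_cast_of_lt (by omega)] at e2
              exact hne (by rw [e1, e2])
            simp only [pterm]
            rw [hsame _ _ hxy hc1 hc2]
        · have huv : t.val < u.val := by omega
          refine ⟨⟨u.val, t.val⟩, ?_, ?_, ?_⟩
          · simp only [pairsS, Finset.mem_sigma, Finset.mem_range]
            exact ⟨ZMod.val_lt u, huv⟩
          · have hdvd1 : (n : ℤ) ∣ (P u - P t + 1) := by
              rw [← ZMod.intCast_zmod_eq_zero_iff_dvd]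
              push_cast
              rw [hP, hP, hposu, hpost]
              ring
            obtain ⟨q, hq⟩ := hdvd1
            have hold : (P u - P t) / (n : ℤ) = q - 1 := by
              rw [show P u - P t = (n : ℤ) * (q - 1) + ((n : ℤ) - 1) by linarith]
              exact ediv_helper hn0 _ _ (by omega) (by omega)
            have hnew : (P' u - P' t) / (n : ℤ) = q := by
              rw [hP't, hP'u,
                show P u + 1 - (P t - 1) = (n : ℤ) * q + 1 by linarith]
              exact ediv_helper hn0 q 1 (by omega) hn1
            simp only [pterm, hcast_val]
            rw [hold, hnew]
            omega
          · intro p hp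
            rw [Finset.mem_erase] at hp
            obtain ⟨hne, hmem⟩ := hp
            obtain ⟨pf, ps⟩ := p
            simp only [pairsS, Finset.mem_sigma, Finset.mem_range] at hmem
            obtain ⟨hfn, hsf⟩ := hmem
            have hxy : ((pf : ℕ) : ZMod n) ≠ ((ps : ℕ) : ZMod n) := by
              intro h
              have := congrArg ZMod.val h
              rw [ZMod.val_cast_of_lt hfn, ZMod.val_cast_of_lt (by omega)] at this
              omega
            have hc2 : ¬(((pf : ℕ) : ZMod n) = t ∧ ((ps : ℕ) : ZMod n) = u) := by
              rintro ⟨h1, h2⟩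
              have e1 := congrArg ZMod.val h1
              have e2 := congrArg ZMod.val h2
              rw [ZMod.val_cast_of_lt hfn] at e1
              rw [ZMod.val_cast_of_lt (by omega)] at e2
              omega
            have hc1 : ¬(((pf : ℕ) : ZMod n) = u ∧ ((ps : ℕ) : ZMod n) = t) := by
              rintro ⟨h1, h2⟩
              have e1 := congrArg ZMod.val h1
              have e2 := congrArg ZMod.val h2
              rw [ZMod.val_cast_of_lt hfn] at e1
              rw [ZMod.val_cast_of_lt (by omega)] at e2
              exact hne (by rw [e1, e2])
            simp only [pterm]
            rw [hsame _ _ hxy hc1 hc2]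
      obtain ⟨p₀, hp₀, hbound, herase⟩ := key
      have hxc : xCount n (w ++ [Xp n]) = xCount n w + 1 := by
        rw [xCount_append, xCount_singleton, if_pos rfl]
      calc ∑ p ∈ pairsS n, pterm n P' p
          = pterm n P' p₀ + ∑ p ∈ (pairsS n).erase p₀, pterm n P' p :=
            (Finset.add_sum_erase _ _ hp₀).symm
        _ = pterm n P' p₀ + ∑ p ∈ (pairsS n).erase p₀, pterm n P p := by
            rw [Finset.sum_congr rfl herase]
        _ ≤ (pterm n P p₀ + 1) + ∑ p ∈ (pairsS n).erase p₀, pterm n P p := by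
            omega
        _ = (∑ p ∈ pairsS n, pterm n P p) + 1 := by
            rw [← Finset.add_sum_erase _ _ hp₀]
            ring
        _ ≤ xCount n w + 1 := by omega
        _ = xCount n (w ++ [Xp n]) := hxc.symm

end LRXAux

namespace LRXAux

open scoped Classical in
theorem xcount_bound {n : ℕ} : ∀ w : List (Equiv.Perm (ZMod n)),
    (¬ ∃ w₁ w₂, w = w₁ ++ Xp n :: Xp n :: w₂) → 2 * xCount n w ≤ w.length + 1
  | [] => by intro _; simp [xCount_nil]
  | [a] => by
    intro _
    rw [show [a] = [a] from rfl, xCount_singleton]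
    split <;> simp
  | a :: b :: tl => by
    intro h
    have hab : ¬(a = Xp n ∧ b = Xp n) := by
      rintro ⟨h1, h2⟩
      exact h ⟨[], tl, by rw [h1, h2]; rfl⟩
    by_cases hax : a = Xp n
    · have hbx : b ≠ Xp n := fun h2 => hab ⟨hax, h2⟩
      have ht : ¬ ∃ w₁ w₂, tl = w₁ ++ Xp n :: Xp n :: w₂ := by
        rintro ⟨w₁, w₂, he⟩
        exact h ⟨a :: b :: w₁, w₂, by rw [he]; rfl⟩
      have := xcount_bound tl ht
      have hc : xCount n (a :: b :: tl) = 1 + xCount n tl := by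
        rw [xCount_cons, xCount_cons, if_pos hax, if_neg hbx]
        omega
      simp only [List.length_cons]
      omega
    · have hbt : ¬ ∃ w₁ w₂, b :: tl = w₁ ++ Xp n :: Xp n :: w₂ := by
        rintro ⟨w₁, w₂, he⟩
        exact h ⟨a :: w₁, w₂, by rw [he]; rfl⟩
      have := xcount_bound (b :: tl) hbt
      have hc : xCount n (a :: b :: tl) = xCount n (b :: tl) := by
        rw [xCount_cons, if_neg hax]
        omega
      simp only [List.length_cons] at *
      omega

theorem length_ge {n : ℕ} (hn : 3 ≤ n) : ∀ (k : ℕ) (w : List (Equiv.Perm (ZMod n))),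
    w.length = k → (∀ x ∈ w, x ∈ genS n) → w.prod = negPerm n →
    n * (n - 1) - 2 * (n ^ 2 / 4) - 1 ≤ w.length := by
  intro k
  induction k using Nat.strong_induction_on with
  | _ k ihk =>
  intro w hlen hw hprod
  by_cases hsp : ∃ w₁ w₂, w = w₁ ++ Xp n :: Xp n :: w₂
  · obtain ⟨w₁, w₂, rfl⟩ := hsp
    have hlt : (w₁ ++ w₂).length < (w₁ ++ Xp n :: Xp n :: w₂).length := by
      simp
    have hw' : ∀ x ∈ w₁ ++ w₂, x ∈ genS n := by
      intro x hx
      apply hw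
      simp only [List.mem_append, List.mem_cons] at hx ⊢
      tauto
    have hprod' : (w₁ ++ w₂).prod = negPerm n := by
      have hxx : Xp n * (Xp n * w₂.prod) = w₂.prod := by
        rw [← mul_assoc, show Xp n * Xp n = 1 from Equiv.swap_mul_self 0 1, one_mul]
      rw [List.prod_append] at hprod ⊢
      rw [List.prod_cons, List.prod_cons, hxx] at hprod
      exact hprod
    have := ihk (w₁ ++ w₂).length (by omega) (w₁ ++ w₂) rfl hw' hprod'
    omega
  · -- no adjacent XX
    have hcount := xcount_bound w hsp
    -- X count lower bound from the lift
    obtain ⟨P, hP, hsum⟩ := exists_lift hn w hw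
    have hPneg : ∀ v : ZMod n, ((P v : ℤ) : ZMod n) = -v := by
      intro v
      rw [hP, hprod, negPerm_inv_apply]
    have hlow := sum_lower hn P hPneg
    have heven : 2 * (n * (n - 1) / 2) = n * (n - 1) := by
      have h2 : 2 ∣ n * (n - 1) := by
        rcases Nat.even_or_odd n with he | ho
        · exact Dvd.dvd.mul_right he.two_dvd _
        · have : Even (n - 1) := by
            rcases ho with ⟨m, hm⟩
            exact ⟨m, by omega⟩
          exact Dvd.dvd.mul_left this.two_dvd _
      omega
    omega

open scoped Classical in
theorem exists_word {n : ℕ} (hn : 3 ≤ n) :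
    ∃ w : List (Equiv.Perm (ZMod n)), (∀ x ∈ w, x ∈ genS n) ∧ w.prod = negPerm n := by
  haveI : NeZero n := ⟨by omega⟩
  haveI : Fact (1 < n) := ⟨by omega⟩
  have hpow : ∀ (m : ℕ) (x : ZMod n), ((Lp n) ^ m) x = x + (m : ZMod n) := by
    intro m
    induction m with
    | zero => intro x; simp
    | succ m ih =>
      intro x
      rw [pow_succ, Equiv.Perm.mul_apply, ih, Lp_apply]
      push_cast
      ring
  have hcyc : (Lp n).IsCycle := by
    refine ⟨0, ?_, ?_⟩
    · rw [Lp_apply]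
      simp
    · intro y hy
      refine ⟨(y.val : ℤ), ?_⟩
      rw [zpow_natCast, hpow]
      rw [zero_add, hcast_val]

  have hsupp : (Lp n).support = Finset.univ := by
    ext x
    simp only [Equiv.Perm.mem_support, Finset.mem_univ, iff_true]
    rw [Lp_apply]
    intro h
    have h' : x + 1 = x + 0 := by rw [add_zero]; exact h
    exact one_ne_zero (add_left_cancel h')
  have hclosure : Subgroup.closure {Lp n, Equiv.swap 0 (Lp n 0)} = ⊤ :=
    Equiv.Perm.closure_cycle_adjacent_swap hcyc hsupp 0
  have hswap : Equiv.swap (0 : ZMod n) (Lp n 0) = Xp n := by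
    rw [Lp_apply, zero_add, Xp]
  rw [hswap] at hclosure
  have hmem : negPerm n ∈ Subgroup.closure {Lp n, Xp n} := by
    rw [hclosure]; trivial
  -- closure induction to extract a word
  have : ∀ g ∈ Subgroup.closure {Lp n, Xp n},
      ∃ w : List (Equiv.Perm (ZMod n)), (∀ x ∈ w, x ∈ genS n) ∧ w.prod = g := by
    intro g hg
    induction hg using Subgroup.closure_induction with
    | mem x hx =>
      refine ⟨[x], ?_, by simp⟩
      intro y hy
      simp only [List.mem_singleton] at hy
      subst hy
      rcases hx with h | h <;> subst h <;> simp [genS]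
    | one => exact ⟨[], by simp, by simp⟩
    | mul x y _ _ ihx ihy =>
      obtain ⟨wx, hwx, hpx⟩ := ihx
      obtain ⟨wy, hwy, hpy⟩ := ihy
      refine ⟨wx ++ wy, ?_, by rw [List.prod_append, hpx, hpy]⟩
      intro z hz
      rw [List.mem_append] at hz
      rcases hz with h | h
      · exact hwx z h
      · exact hwy z h
    | inv x _ ihx =>
      obtain ⟨wx, hwx, hpx⟩ := ihx
      refine ⟨(wx.map Inv.inv).reverse, ?_, ?_⟩
      · intro z hz
        simp only [List.mem_reverse, List.mem_map] at hz
        obtain ⟨y, hy, rfl⟩ := hz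
        have := hwx y hy
        rcases this with h | h | h
        · rw [h]; right; left; rfl
        · rw [h, inv_inv]; left; rfl
        · rw [h, show (Xp n)⁻¹ = Xp n from Equiv.swap_inv 0 1]; right; right; rfl
      · rw [← List.prod_inv_reverse, hpx]
  exact this (negPerm n) hmem

end LRXAux

/-- The LRX word length of a permutation `g` of `ZMod n`: the least `k` such
that `g` is a product of `k` elements of `{L, R, X}`, where `L : i ↦ i + 1`,
`R = L⁻¹ : i ↦ i - 1` and `X = (0 1)` (the identity has word length 0). -/
noncomputable def lrxLength (n : ℕ) (g : Equiv.Perm (ZMod n)) : ℕ :=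
  sInf {k : ℕ | ∃ w : List (Equiv.Perm (ZMod n)),
    (∀ x ∈ w, x ∈ ({Equiv.addRight (1 : ZMod n),
        (Equiv.addRight (1 : ZMod n))⁻¹, Equiv.swap (0 : ZMod n) 1} :
          Set (Equiv.Perm (ZMod n)))) ∧
    w.prod = g ∧ w.length = k}

/-- For every `n ≥ 3`, the diameter of the LRX Cayley graph
of `S_n` (the maximum LRX word length over all permutations of `ZMod n`) is at
least `n(n-1) - 2⌊n²/4⌋ - 1`; for even `n` this lower bound equals
`n(n-1)/2 - n/2 - 1`. -/
theorem lrx_diameter_lower_bound (n : ℕ) (hn : 3 ≤ n) :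
    n * (n - 1) - 2 * (n ^ 2 / 4) - 1 ≤ sSup (Set.range (lrxLength n)) ∧
    (Even n →
      n * (n - 1) - 2 * (n ^ 2 / 4) - 1 = n * (n - 1) / 2 - n / 2 - 1) := by
  constructor
  · haveI : NeZero n := ⟨by omega⟩
    have hsetsame : ({Equiv.addRight (1 : ZMod n),
        (Equiv.addRight (1 : ZMod n))⁻¹, Equiv.swap (0 : ZMod n) 1} :
          Set (Equiv.Perm (ZMod n))) = LRXAux.genS n := rfl
    have hkey : n * (n - 1) - 2 * (n ^ 2 / 4) - 1 ≤ lrxLength n (LRXAux.negPerm n) := by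
      apply le_csInf
      · obtain ⟨w, hw, hprod⟩ := LRXAux.exists_word hn
        exact ⟨w.length, w, by rw [hsetsame]; exact hw, hprod, rfl⟩
      · rintro k ⟨w, hw, hprod, rfl⟩
        rw [hsetsame] at hw
        exact LRXAux.length_ge hn w.length w rfl hw hprod
    refine le_trans hkey (le_csSup ?_ ?_)
    · exact (Set.finite_range _).bddAbove
    · exact Set.mem_range_self _
  · intro hev
    obtain ⟨m, hm⟩ := hev
    have hq : n ^ 2 / 4 = m * m := by
      have h1 : n ^ 2 = 4 * (m * m) := by rw [hm]; ring
      omega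
    have h2 : n * (n - 1) = 2 * (m * (n - 1)) := by
      rw [hm]; ring
    have h3 : m * (n - 1) + m = 2 * (m * m) := by
      have ha : m * (n - 1) + m = m * ((n - 1) + 1) := by ring
      have hb : (n - 1) + 1 = n := by omega
      rw [ha, hb, hm]; ring
    have h4 : n / 2 = m := by omega
    omega
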